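/- Adjoint stress tensor identity at the no-slip wall: let u(t,·) be a jointly C² family of admissible states (ρ > 0) on a neighborhood of x ∈ ℝ² with v(0,x) = 0, such that the relation T(t,·)κ = (μγ/Pr)(E(t,·) − ½‖v(t,·)‖²) holds for all t with constant κ, μ, γ, Pr. Let n ∈ ℝ² be a unit vector, z : ℝ² → ℝ⁴ a C¹ field, write z_{2,3} = (z₂, z₃), and define the adjoint stress tensor Σ := μ( ∇z_{2,3} + (∇z_{2,3})ᵀ − (2/3)(∇·z_{2,3}) I ). Let G be the homogeneity tensor evaluated at u(0,x) (so v = 0) and let u' = (ρ', ρv₁', ρv₂', (ρE)') denote the local shape derivative of the conserved variables at x. Then Σ_{i,j,k,l} u'_j n_l G^{ij}_{kl} ∂z_i/∂x_k = v'·(Σ n) + κ T' (n·∇z₄) at x, where in particular κT' = (μγ/Pr) E' holds at x. -/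

import Mathlib

open MeasureTheory

noncomputable section

/-- The physical domain `ℝ²`. -/
abbrev Dom := EuclideanSpace ℝ (Fin 2)

/-- The space of conserved variables `u = (ρ, ρv₁, ρv₂, ρE) ∈ ℝ⁴`. -/
abbrev St := Fin 4 → ℝ

/-- Standard basis vector of the domain. -/
def ee (k : Fin 2) : Dom := EuclideanSpace.single k 1

/-- Velocity `v_i = u_{i+1}/u_0` from conserved variables. -/
def vel (u : St) (i : Fin 2) : ℝ := u i.succ.castSucc / u 0

/-- Squared speed `‖v‖²`. -/
def kin (u : St) : ℝ := vel u 0 ^ 2 + vel u 1 ^ 2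

/-- Total energy `E = u_3/u_0`. -/
def toten (u : St) : ℝ := u 3 / u 0

/-- Pressure `p = (R/c_v) ρ (E − ½‖v‖²)`. -/
def pres (R cv : ℝ) (u : St) : ℝ := R / cv * u 0 * (toten u - kin u / 2)

/-- Enthalpy `H = E + p/ρ`. -/
def enth (R cv : ℝ) (u : St) : ℝ := toten u + pres R cv u / u 0

/-- Temperature `T = (E − ½‖v‖²)/c_v`. -/
def temp (cv : ℝ) (u : St) : ℝ := (toten u - kin u / 2) / cv

/-- `∂v_i/∂x_l` expressed in terms of `(u, ∇u)`, where `g l = ∂u/∂x_l`. -/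
def dvel (u : St) (g : Fin 2 → St) (i l : Fin 2) : ℝ :=
  (g l i.succ.castSucc * u 0 - u i.succ.castSucc * g l 0) / u 0 ^ 2

/-- `∂E/∂x_l` expressed in terms of `(u, ∇u)`. -/
def dtoten (u : St) (g : Fin 2 → St) (l : Fin 2) : ℝ :=
  (g l 3 * u 0 - u 3 * g l 0) / u 0 ^ 2

/-- `∂T/∂x_l` expressed in terms of `(u, ∇u)`. -/
def dtemp (cv : ℝ) (u : St) (g : Fin 2 → St) (l : Fin 2) : ℝ :=
  (dtoten u g l - (vel u 0 * dvel u g 0 l + vel u 1 * dvel u g 1 l)) / cv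

/-- Viscous stress tensor `τ = μ(∇v + (∇v)ᵀ − (2/3)(∇·v)I)` in terms of `(u, ∇u)`. -/
def tauC (μ : ℝ) (u : St) (g : Fin 2 → St) (i j : Fin 2) : ℝ :=
  μ * (dvel u g i j + dvel u g j i
    - 2 / 3 * (dvel u g 0 0 + dvel u g 1 1) * (if i = j then 1 else 0))

/-- Convective fluxes `F^c = (f₁^c, f₂^c)` as a function of the conserved variables. -/
def Fc (R cv : ℝ) (u : St) (k : Fin 2) : St :=
  ![u 0 * vel u k,
    u 0 * vel u 0 * vel u k + (if k = 0 then pres R cv u else 0),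
    u 0 * vel u 1 * vel u k + (if k = 1 then pres R cv u else 0),
    u 0 * enth R cv u * vel u k]

/-- Viscous fluxes `F^v = (f₁^v, f₂^v)` as a function of `(u, ∇u)`. -/
def Fv (μ κ cv : ℝ) (u : St) (g : Fin 2 → St) (k : Fin 2) : St :=
  ![0,
    tauC μ u g 0 k,
    tauC μ u g 1 k,
    (∑ j, tauC μ u g k j * vel u j) + κ * dtemp cv u g k]

/-- Spatial derivative `∂u/∂x_k` of a field. -/
def Du (u : Dom → St) (x : Dom) (k : Fin 2) : St := fderiv ℝ u x (ee k)

/-- Divergence `∇·Φ = Σ_k ∂Φ_k/∂x_k` of a (two-component, `St`-valued) flux field. -/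
def divF (Φ : Dom → Fin 2 → St) (x : Dom) : St :=
  ∑ k, fderiv ℝ (fun y => Φ y k) x (ee k)

/-- Homogeneity tensor `G^{ij}_{kl} = ∂(f^v_k)_i/∂(∂u_j/∂x_l)`. -/
def Ghom (μ κ cv : ℝ) (u : St) (g : Fin 2 → St) (k l : Fin 2) (i j : Fin 4) : ℝ :=
  fderiv ℝ (fun g' => Fv μ κ cv u g' k i) g (Pi.single l (Pi.single j 1))

/-- The adjoint stress tensor `Σ = μ(∇z_{2,3} + (∇z_{2,3})ᵀ − (2/3)(∇·z_{2,3})I)` of a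
`ℝ⁴`-valued field `z`, at a point `x`. -/
def adjStress (μ : ℝ) (z : Dom → St) (x : Dom) (i j : Fin 2) : ℝ :=
  μ * (fderiv ℝ (fun y => z y i.succ.castSucc) x (ee j)
    + fderiv ℝ (fun y => z y j.succ.castSucc) x (ee i)
    - 2 / 3 * (fderiv ℝ (fun y => z y 1) x (ee 0) + fderiv ℝ (fun y => z y 2) x (ee 1))
        * (if i = j then 1 else 0))

set_option maxHeartbeats 1000000 in
lemma fderiv_isLinearMap {E F : Type*} [NormedAddCommGroup E] [NormedSpace ℝ E]
    [FiniteDimensional ℝ E] [NormedAddCommGroup F] [NormedSpace ℝ F] {φ : E → F}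
    (h : IsLinearMap ℝ φ) (g d : E) : fderiv ℝ φ g d = φ d := by
  have hφ : φ = ⇑(LinearMap.toContinuousLinearMap (IsLinearMap.mk' φ h)) := rfl
  rw [hφ, ContinuousLinearMap.fderiv]

set_option maxHeartbeats 2000000 in
lemma Fv_linear (μ κ cv : ℝ) (u : St) (k : Fin 2) (i : Fin 4) :
    IsLinearMap ℝ (fun g : Fin 2 → St => Fv μ κ cv u g k i) := by
  constructor
  · intro g g'
    fin_cases k <;> fin_cases i <;>
      simp [Fv, tauC, dvel, dtemp, dtoten, Fin.sum_univ_two, Pi.add_apply] <;> ring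
  · intro c g
    fin_cases k <;> fin_cases i <;>
      simp [Fv, tauC, dvel, dtemp, dtoten, Fin.sum_univ_two, Pi.smul_apply, smul_eq_mul] <;> ring

lemma Ghom_eq (μ κ cv : ℝ) (u : St) (g : Fin 2 → St) (k l : Fin 2) (i j : Fin 4) :
    Ghom μ κ cv u g k l i j = Fv μ κ cv u (Pi.single l (Pi.single j 1)) k i := by
  rw [Ghom, fderiv_isLinearMap (Fv_linear μ κ cv u k i)]

set_option maxHeartbeats 4000000 in
/-- adjoint stress tensor identity at the no-slip wall.
For a jointly `C²` family of admissible states with `v(0,x) = 0` satisfying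
`Tκ = (μγ/Pr)(E − ½‖v‖²)` for all `t`, a unit vector `n` and a `C¹` field `z`,
`Σ_{i,j,k,l} u'_j n_l G^{ij}_{kl} ∂z_i/∂x_k = v'·(Σn) + κT'(n·∇z₄)` at `x`,
where moreover `κT' = (μγ/Pr)E'` at `x`. -/
theorem stmt_12 (R cv μ κ γ Pr : ℝ) (hcv : 0 < cv) (hμ : 0 < μ) (hγ : 0 < γ) (hPr : 0 < Pr)
    (δ : ℝ) (hδ : 0 < δ) (U : Set Dom) (hU : IsOpen U) (x : Dom) (hx : x ∈ U)
    (u : ℝ → Dom → St)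
    (hu : ContDiffOn ℝ 2 (fun q : ℝ × Dom => u q.1 q.2) (Set.Ioo (-δ) δ ×ˢ U))
    (hρ : ∀ t ∈ Set.Ioo (-δ) δ, ∀ y ∈ U, 0 < u t y 0)
    (hκrel : ∀ t ∈ Set.Ioo (-δ) δ, ∀ y ∈ U,
      κ * temp cv (u t y) = μ * γ / Pr * (toten (u t y) - kin (u t y) / 2))
    (hv1 : u 0 x 1 = 0) (hv2 : u 0 x 2 = 0)
    (n : Dom) (hn : ‖n‖ = 1)
    (z : Dom → St) (hz : ContDiff ℝ 1 z) :
    (∑ i : Fin 4, ∑ j : Fin 4, ∑ k : Fin 2, ∑ l : Fin 2,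
        deriv (fun t => u t x j) 0 * n l
          * Ghom μ κ cv (u 0 x) (Du (u 0) x) k l i j
          * fderiv ℝ (fun y => z y i) x (ee k))
      = (∑ i : Fin 2, deriv (fun t => vel (u t x) i) 0
            * (∑ j, adjStress μ z x i j * n j))
        + κ * deriv (fun t => temp cv (u t x)) 0 * fderiv ℝ (fun y => z y 3) x n
    ∧ κ * deriv (fun t => temp cv (u t x)) 0
        = μ * γ / Pr * deriv (fun t => toten (u t x)) 0 := by
  have h0I : (0:ℝ) ∈ Set.Ioo (-δ) δ := ⟨by linarith, hδ⟩
  have hne : u 0 x 0 ≠ 0 := ne_of_gt (hρ 0 h0I x hx)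
  have hopen : IsOpen (Set.Ioo (-δ) δ ×ˢ U) := isOpen_Ioo.prod hU
  have hmem : ((0:ℝ), x) ∈ Set.Ioo (-δ) δ ×ˢ U := ⟨h0I, hx⟩
  have hFd : DifferentiableAt ℝ (fun q : ℝ × Dom => u q.1 q.2) (0, x) :=
    (hu.contDiffAt (hopen.mem_nhds hmem)).differentiableAt (by norm_num)
  have hdu : DifferentiableAt ℝ (fun t => u t x) 0 :=
    by have := hFd.comp (0:ℝ) (f := fun t : ℝ => ((t, x) : ℝ × Dom)) (differentiableAt_id.prodMk (differentiableAt_const x)); exact this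
  have hdj : ∀ j : Fin 4, HasDerivAt (fun t => u t x j) (deriv (fun t => u t x j) 0) 0 :=
    fun j => ((differentiableAt_pi.mp hdu) j).hasDerivAt
  have hzero : ∀ i : Fin 2, u 0 x i.succ.castSucc = 0 := by
    intro i; fin_cases i
    · simpa using hv1
    · simpa using hv2
  have hvz : ∀ i : Fin 2, vel (u 0 x) i = 0 := by
    intro i; rw [vel, hzero i, zero_div]
  have hveli : ∀ i : Fin 2, HasDerivAt (fun t => vel (u t x) i)
      (deriv (fun t => u t x i.succ.castSucc) 0 / u 0 x 0) 0 := by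
    intro i
    have h := (hdj i.succ.castSucc).div (hdj 0) hne
    have hval : (deriv (fun t => u t x i.succ.castSucc) 0 * u 0 x 0
        - u 0 x i.succ.castSucc * deriv (fun t => u t x 0) 0) / u 0 x 0 ^ 2
        = deriv (fun t => u t x i.succ.castSucc) 0 / u 0 x 0 := by
      rw [hzero i]; field_simp; ring
    rw [hval] at h
    exact h
  have htoten : HasDerivAt (fun t => toten (u t x))
      ((deriv (fun t => u t x 3) 0 * u 0 x 0 - u 0 x 3 * deriv (fun t => u t x 0) 0)
        / u 0 x 0 ^ 2) 0 := (hdj 3).div (hdj 0) hne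
  have hkin : HasDerivAt (fun t => kin (u t x)) 0 0 := by
    have hk := ((hveli 0).pow 2).add ((hveli 1).pow 2)
    simpa [kin, hvz 0, hvz 1, Pi.add_def, Pi.pow_def] using hk
  have htemp : HasDerivAt (fun t => temp cv (u t x))
      ((deriv (fun t => u t x 3) 0 * u 0 x 0 - u 0 x 3 * deriv (fun t => u t x 0) 0)
        / u 0 x 0 ^ 2 / cv) 0 := by
    have h := (htoten.sub (hkin.div_const 2)).div_const cv
    simpa [temp] using h
  constructor
  · have hnsum : n = (n 0 : ℝ) • ee 0 + (n 1 : ℝ) • ee 1 := by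
      ext i; fin_cases i <;> simp [ee, EuclideanSpace.single_apply]
    have hfz : fderiv ℝ (fun y => z y 3) x n
        = n 0 * fderiv ℝ (fun y => z y 3) x (ee 0)
          + n 1 * fderiv ℝ (fun y => z y 3) x (ee 1) := by
      conv_lhs => rw [hnsum]
      simp
    rw [hfz]
    simp only [Ghom_eq, Fin.sum_univ_two, Fin.sum_univ_four]
    rw [htemp.deriv, (hveli 0).deriv, (hveli 1).deriv]
    have ec0 : ((0:Fin 2).succ.castSucc : Fin 4) = 1 := rfl
    have ec1 : ((1:Fin 2).succ.castSucc : Fin 4) = 2 := rfl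
    have ec2 : ((Fin.castSucc 2 : Fin 4)) = 2 := rfl
    have ec3 : ((Fin.castSucc (2:Fin 3)) : Fin 4) = 2 := rfl
    simp only [ec0, ec1, ec2, ec3, Fv, tauC, dvel, dtemp, dtoten, adjStress, vel, Pi.single_apply,
      Fin.sum_univ_two, Matrix.cons_val_zero, Matrix.cons_val_one, Matrix.head_cons,
      Matrix.cons_val_two, Matrix.cons_val_three, Matrix.tail_cons]
    norm_num [hv1, hv2, Pi.single_apply, Fin.ext_iff]
    field_simp
    ring
  · have heq : (fun t => κ * temp cv (u t x)) =ᶠ[nhds 0]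
        (fun t => μ * γ / Pr * (toten (u t x) - kin (u t x) / 2)) := by
      filter_upwards [Ioo_mem_nhds (by linarith : -δ < (0:ℝ)) hδ] with t ht
      exact hκrel t ht x hx
    have h1 := (htemp.const_mul κ).deriv
    have h2 := ((htoten.sub (hkin.div_const 2)).const_mul (μ * γ / Pr)).deriv
    have h3 := heq.deriv_eq
    simp only [Pi.sub_apply] at h2
    rw [h1, h2] at h3
    rw [htemp.deriv, htoten.deriv]
    linear_combination h3

end
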